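/- Let c_0 > 0 and c_1, s_1 ∈ ℝ satisfy (c_1² + s_1²)/c_0² < 1. Define the 3×3 real matrices A_x = [[0, 1, 0], [1/2 − (c_1² − s_1²)/(2c_0²), c_1/c_0, −s_1/c_0], [−c_1 s_1/c_0², s_1/c_0, c_1/c_0]] and A_y = [[0, 0, 1], [−c_1 s_1/c_0², s_1/c_0, c_1/c_0], [1/2 + (c_1² − s_1²)/(2c_0²), −c_1/c_0, s_1/c_0]]. Then for every (a, b) ∈ ℝ² with a² + b² > 0, the matrix a·A_x + b·A_y has three distinct real eigenvalues. -/

import Mathlib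

open Matrix Polynomial

/-- The `x`-direction flux Jacobian of the single-node Poisson-EQMOM system. -/
noncomputable def Ax (c0 c1 s1 : ℝ) : Matrix (Fin 3) (Fin 3) ℝ :=
  !![0, 1, 0;
     1 / 2 - (c1 ^ 2 - s1 ^ 2) / (2 * c0 ^ 2), c1 / c0, -s1 / c0;
     -(c1 * s1) / c0 ^ 2, s1 / c0, c1 / c0]

/-- The `y`-direction flux Jacobian of the single-node Poisson-EQMOM system. -/
noncomputable def Ay (c0 c1 s1 : ℝ) : Matrix (Fin 3) (Fin 3) ℝ :=
  !![0, 0, 1;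
     -(c1 * s1) / c0 ^ 2, s1 / c0, c1 / c0;
     1 / 2 + (c1 ^ 2 - s1 ^ 2) / (2 * c0 ^ 2), -c1 / c0, s1 / c0]


theorem charpoly_fin_three' (M : Matrix (Fin 3) (Fin 3) ℝ) :
    M.charpoly =
      (X - C (M 0 0)) * (X - C (M 1 1)) * (X - C (M 2 2))
      - C (M 0 1) * C (M 1 0) * (X - C (M 2 2))
      - C (M 0 2) * C (M 2 0) * (X - C (M 1 1))
      - C (M 1 2) * C (M 2 1) * (X - C (M 0 0))
      - C (M 0 1) * C (M 1 2) * C (M 2 0)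
      - C (M 0 2) * C (M 1 0) * C (M 2 1) := by
  rw [Matrix.charpoly, Matrix.det_fin_three]
  simp only [charmatrix_apply_eq, charmatrix_apply_ne _ _ _ (by decide : (0:Fin 3) ≠ 1),
    charmatrix_apply_ne _ _ _ (by decide : (0:Fin 3) ≠ 2),
    charmatrix_apply_ne _ _ _ (by decide : (1:Fin 3) ≠ 0),
    charmatrix_apply_ne _ _ _ (by decide : (1:Fin 3) ≠ 2),
    charmatrix_apply_ne _ _ _ (by decide : (2:Fin 3) ≠ 0),
    charmatrix_apply_ne _ _ _ (by decide : (2:Fin 3) ≠ 1)]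
  ring

/-- If `(c1² + s1²)/c0² < 1`, then for every `(a,b) ≠ (0,0)` the matrix
`a·Ax + b·Ay` has three distinct real eigenvalues (strict hyperbolicity). -/
theorem strict_hyperbolicity (c0 c1 s1 : ℝ) (hc0 : 0 < c0)
    (hr : (c1 ^ 2 + s1 ^ 2) / c0 ^ 2 < 1) (a b : ℝ) (hab : 0 < a ^ 2 + b ^ 2) :
    ∃ l1 l2 l3 : ℝ, l1 ≠ l2 ∧ l1 ≠ l3 ∧ l2 ≠ l3 ∧
      (a • Ax c0 c1 s1 + b • Ay c0 c1 s1).charpoly =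
        (X - C l1) * (X - C l2) * (X - C l3) := by
  have hc0' : c0 ≠ 0 := ne_of_gt hc0
  set u : ℝ := c1 / c0 with hu
  set v : ℝ := s1 / c0 with hv
  have huv : u ^ 2 + v ^ 2 < 1 := by
    have : u ^ 2 + v ^ 2 = (c1 ^ 2 + s1 ^ 2) / c0 ^ 2 := by
      rw [hu, hv, div_pow, div_pow, ← add_div]
    linarith [this ▸ hr]
  set m : ℝ := a * u + b * v with hm
  set D : ℝ := m ^ 2 + 2 * (a ^ 2 + b ^ 2) * (1 - u ^ 2 - v ^ 2) with hD
  have hDpos : 0 < D := by nlinarith [sq_nonneg m]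
  set s : ℝ := Real.sqrt D with hsdef
  have hs2 : s ^ 2 = D := Real.sq_sqrt hDpos.le
  have hspos : 0 < s := Real.sqrt_pos.mpr hDpos
  refine ⟨m, (m - s) / 2, (m + s) / 2, ?_, ?_, ?_, ?_⟩
  · intro h
    have : m = -s := by linarith
    nlinarith [this]
  · intro h
    have : m = s := by linarith
    nlinarith [this]
  · intro h; linarith
  · have hM : a • Ax c0 c1 s1 + b • Ay c0 c1 s1 =
        !![0, a, b;
           a * (1 / 2 - (u ^ 2 - v ^ 2) / 2) + b * (-(u * v)),
             m, -(a * v) + b * u;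
           a * (-(u * v)) + b * (1 / 2 + (u ^ 2 - v ^ 2) / 2),
             a * v - b * u, m] := by
      ext i j
      fin_cases i <;> fin_cases j <;>
        simp [Ax, Ay, hu, hv, hm] <;> field_simp <;> ring
    rw [hM, charpoly_fin_three']
    apply Polynomial.funext
    intro x
    simp only [eval_mul, eval_sub, eval_add, eval_neg, eval_X, eval_C,
      Matrix.of_apply, Matrix.cons_val', Matrix.cons_val_zero, Matrix.cons_val_one,
      Matrix.head_cons, Matrix.head_fin_const, Matrix.empty_val',
      Matrix.cons_val_fin_one, Matrix.cons_val_two, Matrix.tail_cons]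
    linear_combination (x - m) / 4 * hs2
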